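/- Let X be a complex Hilbert space, P₀, S₀ densely defined linear operators in X with adjoints P = P₀*, S = S₀* satisfying the coercivity assumption, suppose the relation H is symmetric, and let (G, Γ₀, Γ₁) be a boundary triplet for ran[P;S]. Then for every linear relation Θ ⊆ G × G, the closure of ran A_Θ in X × X equals ran A_{cl(Θ)}, where cl(Θ) is the closure of Θ in G × G. -/

import Mathlib

open scoped ComplexInnerProductSpace

noncomputable section

/-- The adjoint of a linear relation (given as a set of pairs) in an inner product space. -/
def relAdj {Y : Type*} [NormedAddCommGroup Y] [InnerProductSpace ℂ Y]
    (T : Set (Y × Y)) : Set (Y × Y) :=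
  {g | ∀ h ∈ T, ⟪g.2, h.1⟫ = ⟪g.1, h.2⟫}

/-- A linear relation is self-adjoint if it coincides with its adjoint relation. -/
def IsSelfAdjointRel {Y : Type*} [NormedAddCommGroup Y] [InnerProductSpace ℂ Y]
    (T : Set (Y × Y)) : Prop := T = relAdj T

/-- A relation `T` is dissipative if `Re ⟪g, f⟫ ≤ 0` for all `(f, g) ∈ T`. -/
def Dissipative {Y : Type*} [NormedAddCommGroup Y] [InnerProductSpace ℂ Y]
    (T : Set (Y × Y)) : Prop := ∀ p ∈ T, (⟪p.2, p.1⟫).re ≤ 0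

/-- A relation is maximally dissipative if it is dissipative and equals every dissipative
linear relation containing it. -/
def MaxDissipative {Y : Type*} [NormedAddCommGroup Y] [InnerProductSpace ℂ Y]
    (T : Set (Y × Y)) : Prop :=
  Dissipative T ∧
    ∀ K : Submodule ℂ (Y × Y), Dissipative (K : Set (Y × Y)) → T ⊆ (K : Set (Y × Y)) →
      T = (K : Set (Y × Y))

variable {X : Type*} [NormedAddCommGroup X] [InnerProductSpace ℂ X] [CompleteSpace X]

/-- `dom[P;S] = dom P ⊓ dom S`. -/
def colDom (P S : X →ₗ.[ℂ] X) : Submodule ℂ X := P.domain ⊓ S.domain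

/-- Application of `P` on `dom[P;S]`. -/
def Pap (P S : X →ₗ.[ℂ] X) (x : colDom P S) : X := P ⟨x.1, x.2.1⟩

/-- Application of `S` on `dom[P;S]`. -/
def Sap (P S : X →ₗ.[ℂ] X) (x : colDom P S) : X := S ⟨x.1, x.2.2⟩

/-- The coercivity assumption on the column operator `[P;S]`. -/
def Coercive (P S : X →ₗ.[ℂ] X) : Prop :=
  ∃ c : ℝ, 0 < c ∧ ∀ x : colDom P S,
    c ^ 2 * ‖(x : X)‖ ^ 2 ≤ ‖Pap P S x‖ ^ 2 + ‖Sap P S x‖ ^ 2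

/-- The range of the column operator `[P;S]` as a linear relation:
`{(Px, Sx) : x ∈ dom P ⊓ dom S}`. -/
def ranPS (P S : X →ₗ.[ℂ] X) : Set (X × X) :=
  {p | ∃ x : colDom P S, p = (Pap P S x, Sap P S x)}

/-- The relation `H = {(f₁, f₂) ∈ dom S₀ × dom P₀ : S₀ f₁ = P₀ f₂}`. -/
def Hrel (P₀ S₀ : X →ₗ.[ℂ] X) : Set (X × X) :=
  {f | ∃ (h₁ : f.1 ∈ S₀.domain) (h₂ : f.2 ∈ P₀.domain), S₀ ⟨f.1, h₁⟩ = P₀ ⟨f.2, h₂⟩}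

/-- Boundary triplet for `ran [P;S]`: `Γ = (Γ₀, Γ₁)` is surjective onto `G × G` and
the abstract Green identity holds. -/
structure IsBoundaryTriplet (P S : X →ₗ.[ℂ] X)
    (G : Type*) [NormedAddCommGroup G] [InnerProductSpace ℂ G]
    (Γ₀ Γ₁ : colDom P S →ₗ[ℂ] G) : Prop where
  surj : Function.Surjective fun x : colDom P S => (Γ₀ x, Γ₁ x)
  green : ∀ x y : colDom P S,
    ⟪Sap P S x, Pap P S y⟫ - ⟪Pap P S x, Sap P S y⟫ = ⟪Γ₁ x, Γ₀ y⟫ - ⟪Γ₀ x, Γ₁ y⟫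

/-- `ran A_Θ = {(Px, Sx) : x ∈ dom[P;S], (Γ₀ x, Γ₁ x) ∈ Θ}`. -/
def ranA (P S : X →ₗ.[ℂ] X) {G : Type*} [NormedAddCommGroup G] [InnerProductSpace ℂ G]
    (Γ₀ Γ₁ : colDom P S →ₗ[ℂ] G) (Θ : Set (G × G)) : Set (X × X) :=
  {p | ∃ x : colDom P S, (Γ₀ x, Γ₁ x) ∈ Θ ∧ p = (Pap P S x, Sap P S x)}

/-- The graph inner product `⟪Px, Py⟫ + ⟪Sx, Sy⟫` on `dom[P;S]`. -/
def gip (P S : X →ₗ.[ℂ] X) (x y : colDom P S) : ℂ :=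
  ⟪Pap P S x, Pap P S y⟫ + ⟪Sap P S x, Sap P S y⟫

/-- The squared graph norm `‖Px‖² + ‖Sx‖²` on `dom[P;S]`. -/
def gnormSq (P S : X →ₗ.[ℂ] X) (x : colDom P S) : ℝ :=
  ‖Pap P S x‖ ^ 2 + ‖Sap P S x‖ ^ 2

set_option linter.unusedSectionVars false
set_option linter.unusedVariables false

def PapL (P S : X →ₗ.[ℂ] X) : colDom P S →ₗ[ℂ] X :=
  P.toFun.comp (Submodule.inclusion inf_le_left)
def SapL (P S : X →ₗ.[ℂ] X) : colDom P S →ₗ[ℂ] X :=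
  S.toFun.comp (Submodule.inclusion inf_le_right)

lemma PapL_eq (P S : X →ₗ.[ℂ] X) (x : colDom P S) : PapL P S x = Pap P S x := rfl
lemma SapL_eq (P S : X →ₗ.[ℂ] X) (x : colDom P S) : SapL P S x = Sap P S x := rfl

def Phi (P S : X →ₗ.[ℂ] X) : colDom P S →ₗ[ℂ] X × X := (PapL P S).prod (SapL P S)

lemma Phi_apply (P S : X →ₗ.[ℂ] X) (x : colDom P S) :
    Phi P S x = (Pap P S x, Sap P S x) := rfl

lemma adjoint_seq_closed (T : X →ₗ.[ℂ] X) (hTd : Dense (T.domain : Set X))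
    (x : ℕ → X) (hx : ∀ n, x n ∈ T.adjoint.domain) {xl u : X}
    (hlim : Filter.Tendsto x Filter.atTop (nhds xl))
    (hulim : Filter.Tendsto (fun n => T.adjoint ⟨x n, hx n⟩) Filter.atTop (nhds u)) :
    ∃ h : xl ∈ T.adjoint.domain, T.adjoint ⟨xl, h⟩ = u := by
  have key : ∀ v : T.domain, ⟪u, (v : X)⟫ = ⟪xl, T v⟫ := by
    intro v
    have h1 : ∀ n, ⟪T.adjoint ⟨x n, hx n⟩, (v : X)⟫ = ⟪x n, T v⟫ := fun n =>
      (LinearPMap.adjoint_isFormalAdjoint hTd) ⟨x n, hx n⟩ v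
    have l1 : Filter.Tendsto (fun n => ⟪T.adjoint ⟨x n, hx n⟩, (v : X)⟫) Filter.atTop
        (nhds ⟪u, (v : X)⟫) := hulim.inner tendsto_const_nhds
    have l2 : Filter.Tendsto (fun n => ⟪x n, T v⟫) Filter.atTop (nhds ⟪xl, T v⟫) :=
      hlim.inner tendsto_const_nhds
    exact tendsto_nhds_unique (by simpa only [h1] using l1) l2
  have hmem : xl ∈ T.adjoint.domain :=
    LinearPMap.mem_adjoint_domain_of_exists (T := T) xl ⟨u, key⟩
  exact ⟨hmem, LinearPMap.adjoint_apply_eq hTd ⟨xl, hmem⟩ key⟩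

lemma norm_bound {P S : X →ₗ.[ℂ] X} (hcoer : Coercive P S) :
    ∃ C : ℝ, 0 < C ∧ ∀ x : colDom P S, ‖(x : X)‖ ≤ C * ‖Phi P S x‖ := by
  obtain ⟨c, hc, hcb⟩ := hcoer
  refine ⟨2 / c, by positivity, fun x => ?_⟩
  have h1 : ‖Pap P S x‖ ≤ ‖Phi P S x‖ := by rw [Phi_apply]; exact norm_fst_le (Pap P S x, Sap P S x)
  have h2 : ‖Sap P S x‖ ≤ ‖Phi P S x‖ := by rw [Phi_apply]; exact norm_snd_le (Pap P S x, Sap P S x)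
  have hb := hcb x
  have hn1 : (0:ℝ) ≤ ‖(x:X)‖ := norm_nonneg _
  have hn2 : (0:ℝ) ≤ ‖Phi P S x‖ := norm_nonneg _
  have hn3 : (0:ℝ) ≤ ‖Pap P S x‖ := norm_nonneg _
  have hn4 : (0:ℝ) ≤ ‖Sap P S x‖ := norm_nonneg _
  rw [div_mul_eq_mul_div, le_div_iff₀ hc]
  nlinarith [sq_nonneg (c * ‖(x:X)‖ - 2 * ‖Phi P S x‖), sq_nonneg (‖Pap P S x‖ - ‖Phi P S x‖),
    mul_le_mul h1 h1 hn3 hn2, mul_le_mul h2 h2 hn4 hn2]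

lemma range_closed (P₀ S₀ P S : X →ₗ.[ℂ] X)
    (hP₀ : Dense (P₀.domain : Set X)) (hS₀ : Dense (S₀.domain : Set X))
    (hP : P = P₀.adjoint) (hS : S = S₀.adjoint)
    (hcoer : Coercive P S) :
    IsClosed ((LinearMap.range (Phi P S) : Submodule ℂ (X × X)) : Set (X × X)) := by
  subst hP; subst hS
  set P := P₀.adjoint
  set S := S₀.adjoint
  obtain ⟨C, hC, hCb⟩ := norm_bound hcoer
  apply IsSeqClosed.isClosed
  rintro p q hp hq
  choose x hx using fun n => LinearMap.mem_range.mp (hp n)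
  -- x n is Cauchy
  have hxc : CauchySeq (fun n => ((x n : X))) := by
    rw [Metric.cauchySeq_iff]
    intro ε hε
    obtain ⟨N, hN⟩ := Metric.cauchySeq_iff.mp hq.cauchySeq (ε / C) (by positivity)
    refine ⟨N, fun m hm n hn => ?_⟩
    have : dist ((x m : X)) ((x n : X)) ≤ C * dist (p m) (p n) := by
      rw [dist_eq_norm, dist_eq_norm]
      calc ‖(x m : X) - (x n : X)‖ = ‖((x m - x n : colDom P S) : X)‖ := by norm_cast
        _ ≤ C * ‖Phi P S (x m - x n)‖ := hCb _
        _ = C * ‖p m - p n‖ := by rw [map_sub, hx, hx]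
    calc dist ((x m : X)) ((x n : X)) ≤ C * dist (p m) (p n) := this
      _ < C * (ε / C) := by
          exact (mul_lt_mul_iff_right₀ hC).mpr (hN m hm n hn)
      _ = ε := by field_simp
  obtain ⟨xl, hxl⟩ := cauchySeq_tendsto_of_complete hxc
  -- limits of components
  have hPlim : Filter.Tendsto (fun n => Pap P S (x n)) Filter.atTop (nhds q.1) := by
    have : (fun n => Pap P S (x n)) = fun n => (p n).1 := by
      funext n; rw [← hx n, Phi_apply]
    rw [this]; exact (continuous_fst.tendsto _).comp hq
  have hSlim : Filter.Tendsto (fun n => Sap P S (x n)) Filter.atTop (nhds q.2) := by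
    have : (fun n => Sap P S (x n)) = fun n => (p n).2 := by
      funext n; rw [← hx n, Phi_apply]
    rw [this]; exact (continuous_snd.tendsto _).comp hq
  obtain ⟨hmemP, hvalP⟩ := adjoint_seq_closed P₀ hP₀ (fun n => (x n : X))
    (fun n => (x n).2.1) hxl hPlim
  obtain ⟨hmemS, hvalS⟩ := adjoint_seq_closed S₀ hS₀ (fun n => (x n : X))
    (fun n => (x n).2.2) hxl hSlim
  refine LinearMap.mem_range.mpr ⟨⟨xl, hmemP, hmemS⟩, ?_⟩
  rw [Phi_apply]
  exact Prod.ext hvalP hvalS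

set_option maxHeartbeats 1000000 in
/-- `closure (ran A_Θ) = ran A_{closure Θ}` for every linear relation `Θ`. -/
theorem closure_ranA
    {G : Type*} [NormedAddCommGroup G] [InnerProductSpace ℂ G] [CompleteSpace G]
    (P₀ S₀ P S : X →ₗ.[ℂ] X)
    (hP₀ : Dense (P₀.domain : Set X)) (hS₀ : Dense (S₀.domain : Set X))
    (hP : P = P₀.adjoint) (hS : S = S₀.adjoint)
    (hcoer : Coercive P S)
    (hsym : Hrel P₀ S₀ ⊆ relAdj (Hrel P₀ S₀))
    (Γ₀ Γ₁ : colDom P S →ₗ[ℂ] G)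
    (hbt : IsBoundaryTriplet P S G Γ₀ Γ₁)
    (Θ : Submodule ℂ (G × G)) :
    closure (ranA P S Γ₀ Γ₁ (Θ : Set (G × G)))
      = ranA P S Γ₀ Γ₁ (closure (Θ : Set (G × G))) := by
  obtain ⟨C, hC, hCb⟩ := norm_bound hcoer
  -- injectivity of Phi
  have hinj : Function.Injective (Phi P S) := by
    intro a b hab
    have h1 : ‖((a - b : colDom P S) : X)‖ ≤ C * ‖Phi P S (a - b)‖ := hCb _
    rw [map_sub, hab, sub_self, norm_zero, mul_zero] at h1
    have : ((a - b : colDom P S) : X) = 0 := norm_le_zero_iff.mp h1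
    have : a - b = 0 := by exact_mod_cast Subtype.ext this
    exact sub_eq_zero.mp this
  set R := LinearMap.range (Phi P S) with hRdef
  have hRclosed : IsClosed (R : Set (X × X)) := range_closed P₀ S₀ P S hP₀ hS₀ hP hS hcoer
  haveI : CompleteSpace R := hRclosed.completeSpace_coe
  set e : colDom P S ≃ₗ[ℂ] R := LinearEquiv.ofInjective (Phi P S) hinj with hedef
  have he : ∀ x : colDom P S, ((e x : X × X)) = Phi P S x := fun x => rfl
  set g : R →ₗ[ℂ] G × G := (Γ₀.prod Γ₁) ∘ₗ (e.symm : R →ₗ[ℂ] colDom P S) with hgdef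
  have hgapp : ∀ r : R, g r = (Γ₀ (e.symm r), Γ₁ (e.symm r)) := fun r => rfl
  have hge : ∀ x : colDom P S, g (e x) = (Γ₀ x, Γ₁ x) := by
    intro x; rw [hgapp, e.symm_apply_apply]
  have hval : ∀ r : R, (r : X × X) = Phi P S (e.symm r) := by
    intro r
    have h := he (e.symm r)
    rwa [e.apply_symm_apply] at h
  -- continuity of g
  have hgcont : Continuous g := by
    apply g.continuous_of_seq_closed_graph
    intro u r gl hu hgu
    set x : ℕ → colDom P S := fun n => e.symm (u n) with hxdef
    set xl : colDom P S := e.symm r with hxldef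
    have huval : Filter.Tendsto (fun n => ((u n : X × X))) Filter.atTop (nhds (r : X × X)) :=
      (continuous_subtype_val.tendsto r).comp hu
    have hPx : ∀ n : ℕ, Pap P S (x n) = ((u n : X × X)).1 := by
      intro n; rw [hval (u n), Phi_apply]
    have hSx : ∀ n : ℕ, Sap P S (x n) = ((u n : X × X)).2 := by
      intro n; rw [hval (u n), Phi_apply]
    have hPxl : Pap P S xl = (r : X × X).1 := by rw [hval r, Phi_apply]
    have hSxl : Sap P S xl = (r : X × X).2 := by rw [hval r, Phi_apply]
    have hPlim : Filter.Tendsto (fun n => Pap P S (x n)) Filter.atTop (nhds (Pap P S xl)) := by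
      simp only [hPx, hPxl]; exact (continuous_fst.tendsto _).comp huval
    have hSlim : Filter.Tendsto (fun n => Sap P S (x n)) Filter.atTop (nhds (Sap P S xl)) := by
      simp only [hSx, hSxl]; exact (continuous_snd.tendsto _).comp huval
    have hΓ0lim : Filter.Tendsto (fun n => Γ₀ (x n)) Filter.atTop (nhds gl.1) := by
      have : ∀ n : ℕ, Γ₀ (x n) = (g (u n)).1 := fun n => by rw [hgapp]
      simp only [this]; exact (continuous_fst.tendsto _).comp hgu
    have hΓ1lim : Filter.Tendsto (fun n => Γ₁ (x n)) Filter.atTop (nhds gl.2) := by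
      have : ∀ n : ℕ, Γ₁ (x n) = (g (u n)).2 := fun n => by rw [hgapp]
      simp only [this]; exact (continuous_snd.tendsto _).comp hgu
    have key : ∀ y : colDom P S, ⟪gl.2 - Γ₁ xl, Γ₀ y⟫ = ⟪gl.1 - Γ₀ xl, Γ₁ y⟫ := by
      intro y
      have l1 : Filter.Tendsto
          (fun n => ⟪Sap P S (x n), Pap P S y⟫ - ⟪Pap P S (x n), Sap P S y⟫)
          Filter.atTop (nhds (⟪Sap P S xl, Pap P S y⟫ - ⟪Pap P S xl, Sap P S y⟫)) :=
        (hSlim.inner tendsto_const_nhds).sub (hPlim.inner tendsto_const_nhds)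
      have l2 : Filter.Tendsto
          (fun n => ⟪Γ₁ (x n), Γ₀ y⟫ - ⟪Γ₀ (x n), Γ₁ y⟫)
          Filter.atTop (nhds (⟪gl.2, Γ₀ y⟫ - ⟪gl.1, Γ₁ y⟫)) :=
        (hΓ1lim.inner tendsto_const_nhds).sub (hΓ0lim.inner tendsto_const_nhds)
      have l1' : Filter.Tendsto
          (fun n => ⟪Sap P S (x n), Pap P S y⟫ - ⟪Pap P S (x n), Sap P S y⟫)
          Filter.atTop (nhds (⟪gl.2, Γ₀ y⟫ - ⟪gl.1, Γ₁ y⟫)) := by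
        have : (fun n => ⟪Sap P S (x n), Pap P S y⟫ - ⟪Pap P S (x n), Sap P S y⟫)
            = fun n => ⟪Γ₁ (x n), Γ₀ y⟫ - ⟪Γ₀ (x n), Γ₁ y⟫ := by
          funext n; exact hbt.green (x n) y
        rw [this]; exact l2
      have heq := tendsto_nhds_unique l1 l1'
      have hgreen := hbt.green xl y
      rw [inner_sub_left, inner_sub_left]
      linear_combination hgreen - heq
    obtain ⟨y, hy⟩ := hbt.surj (gl.2 - Γ₁ xl, -(gl.1 - Γ₀ xl))
    have h0 := key y
    rw [show Γ₀ y = gl.2 - Γ₁ xl from congrArg Prod.fst hy,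
      show Γ₁ y = -(gl.1 - Γ₀ xl) from congrArg Prod.snd hy, inner_neg_right] at h0
    rw [inner_self_eq_norm_sq_to_K, inner_self_eq_norm_sq_to_K] at h0
    have h0' : ‖gl.2 - Γ₁ xl‖ ^ 2 = -‖gl.1 - Γ₀ xl‖ ^ 2 := by exact_mod_cast congrArg Complex.re h0
    have ha : gl.2 - Γ₁ xl = 0 := by
      have : ‖gl.2 - Γ₁ xl‖ = 0 := by nlinarith [sq_nonneg ‖gl.1 - Γ₀ xl‖, norm_nonneg (gl.2 - Γ₁ xl)]
      exact norm_eq_zero.mp this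
    have hb : gl.1 - Γ₀ xl = 0 := by
      have : ‖gl.1 - Γ₀ xl‖ = 0 := by nlinarith [sq_nonneg ‖gl.2 - Γ₁ xl‖, norm_nonneg (gl.1 - Γ₀ xl)]
      exact norm_eq_zero.mp this
    rw [hgapp]
    exact Prod.ext (sub_eq_zero.mp hb) (sub_eq_zero.mp ha)
  set gc : R →L[ℂ] G × G := ⟨g, hgcont⟩ with hgcdef
  have hsurj : Function.Surjective gc := by
    intro θ
    obtain ⟨xx, hxx⟩ := hbt.surj θ
    exact ⟨e xx, by rw [show gc (e xx) = g (e xx) from rfl, hge]; exact hxx⟩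
  have hranA : ∀ Θ' : Set (G × G), ranA P S Γ₀ Γ₁ Θ' = Subtype.val '' (gc ⁻¹' Θ') := by
    intro Θ'
    ext pt
    constructor
    · rintro ⟨xx, hmem, rfl⟩
      refine ⟨e xx, ?_, ?_⟩
      · show g (e xx) ∈ Θ'; rw [hge]; exact hmem
      · rw [he, Phi_apply]
    · rintro ⟨r, hr, rfl⟩
      refine ⟨e.symm r, ?_, ?_⟩
      · have : g r ∈ Θ' := hr
        rwa [hgapp] at this
      · rw [hval r, Phi_apply]
  rw [hranA, hranA]
  apply subset_antisymm
  · apply closure_minimal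
    · exact Set.image_mono (Set.preimage_mono subset_closure)
    · exact hRclosed.isClosedEmbedding_subtypeVal.isClosedMap _
        (isClosed_closure.preimage gc.continuous)
  · rintro pt ⟨r, hr, rfl⟩
    obtain ⟨Cg, hCg, hCgb⟩ := gc.exists_preimage_norm_le hsurj
    obtain ⟨θ, hθmem, hθlim⟩ := mem_closure_iff_seq_limit.mp hr
    choose s hs hsn using fun n => hCgb (θ n - gc r)
    refine mem_closure_iff_seq_limit.mpr ⟨fun n => ((r + s n : R) : X × X),
      fun n => ⟨r + s n, ?_, rfl⟩, ?_⟩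
    · show gc (r + s n) ∈ (Θ : Set (G × G))
      rw [map_add, hs, add_sub_cancel]
      exact hθmem n
    · have h0 : Filter.Tendsto (fun n => θ n - gc r) Filter.atTop (nhds 0) := by
        simpa using hθlim.sub (tendsto_const_nhds : Filter.Tendsto (fun _ : ℕ => gc r) _ _)
      have h1 : Filter.Tendsto (fun n => ‖s n‖) Filter.atTop (nhds 0) := by
        have hb : Filter.Tendsto (fun n => Cg * ‖θ n - gc r‖) Filter.atTop (nhds 0) := by
          simpa using h0.norm.const_mul Cg
        exact squeeze_zero (fun n => norm_nonneg _) hsn hb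
      have h2 : Filter.Tendsto s Filter.atTop (nhds 0) :=
        tendsto_zero_iff_norm_tendsto_zero.mpr h1
      have h3 : Filter.Tendsto (fun n => r + s n) Filter.atTop (nhds r) := by
        simpa using (tendsto_const_nhds : Filter.Tendsto (fun _ : ℕ => r) _ _).add h2
      exact (continuous_subtype_val.tendsto r).comp h3
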